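/- Disjoint Automorphism Criterion (algebraic form): Let Γ be a finite simple graph on n vertices admitting two nontrivial disjoint automorphisms σ and τ. Then there exists a matrix u ∈ M_n(M₂(ℂ)) satisfying the quantum automorphism relations for Γ whose entries do not all commute, i.e. u_{ij} u_{kl} ≠ u_{kl} u_{ij} for some indices i, j, k, l (so the relations defining the quantum automorphism group of Γ admit a non-commutative solution). -/

import Mathlib

open Matrix

/-- A matrix `u` over a (unital, associative) ring is a *magic matrix*. -/
def IsMagic {V : Type*} [Fintype V] [DecidableEq V] {A : Type*} [Ring A]
    (u : Matrix V V A) : Prop :=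
  (∀ i j k, u i j * u i k = if j = k then u i j else 0) ∧
  (∀ i j k, u j i * u k i = if j = k then u j i else 0) ∧
  (∀ i, ∑ k, u i k = 1) ∧
  (∀ i, ∑ k, u k i = 1)

/-- `u` satisfies the quantum automorphism relations for the graph `Γ`:
it is a magic matrix and `u i k * u j l = 0 = u j l * u i k` whenever
`ε_{ij} ≠ ε_{kl}` for the adjacency matrix `ε` of `Γ`. -/
def QuantumRel {V : Type*} [Fintype V] [DecidableEq V] (Γ : SimpleGraph V)
    {A : Type*} [Ring A] (u : Matrix V V A) : Prop :=
  IsMagic u ∧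
    ∀ i j k l, ¬ (Γ.Adj i j ↔ Γ.Adj k l) → u i k * u j l = 0 ∧ u j l * u i k = 0

private noncomputable def Pm : Matrix (Fin 2) (Fin 2) ℂ := !![1, 0; 0, 0]
private noncomputable def Qm : Matrix (Fin 2) (Fin 2) ℂ := !![(1:ℂ)/2, 1/2; 1/2, 1/2]

private lemma Pm_idem : Pm * Pm = Pm := by
  ext i j; fin_cases i <;> fin_cases j <;> simp [Pm, mul_apply, Fin.sum_univ_two]

private lemma Qm_idem : Qm * Qm = Qm := by
  ext i j; fin_cases i <;> fin_cases j <;> norm_num [Qm, mul_apply, Fin.sum_univ_two]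

private lemma PQ_ne : Pm * Qm ≠ Qm * Pm := by
  intro h
  have h2 : (Pm * Qm) 0 1 = (Qm * Pm) 0 1 := by rw [h]
  norm_num [Pm, Qm, mul_apply, Fin.sum_univ_two] at h2

/-- **Disjoint Automorphism Criterion (algebraic form).** If a finite simple graph `Γ`
on `n` vertices admits two nontrivial disjoint automorphisms `σ` and `τ`, then there is
a matrix `u ∈ Mₙ(M₂(ℂ))` satisfying the quantum automorphism relations for `Γ` whose
entries do not all commute. -/
theorem disjoint_automorphism_criterion {n : ℕ} (Γ : SimpleGraph (Fin n))
    (σ τ : Equiv.Perm (Fin n))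
    (hσ : ∀ i j, Γ.Adj (σ i) (σ j) ↔ Γ.Adj i j)
    (hτ : ∀ i j, Γ.Adj (τ i) (τ j) ↔ Γ.Adj i j)
    (hσ1 : σ ≠ 1) (hτ1 : τ ≠ 1)
    (hdisj : ∀ i, (σ i ≠ i → τ i = i) ∧ (τ i ≠ i → σ i = i)) :
    ∃ u : Matrix (Fin n) (Fin n) (Matrix (Fin 2) (Fin 2) ℂ),
      QuantumRel Γ u ∧ ∃ i j k l, u i j * u k l ≠ u k l * u i j := by
  classical
  obtain ⟨a, ha⟩ : ∃ a, σ a ≠ a := by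
    by_contra h
    push_neg at h
    exact hσ1 (Equiv.ext fun i => h i)
  obtain ⟨b, hb⟩ : ∃ b, τ b ≠ b := by
    by_contra h
    push_neg at h
    exact hτ1 (Equiv.ext fun i => h i)
  set ρ : Equiv.Perm (Fin n) := σ * τ with hρdef
  set f : Fin n → Matrix (Fin 2) (Fin 2) ℂ :=
    fun j => if σ j = j then (if τ j = j then 1 else Qm) else Pm with hfdef
  -- basic facts about ρ
  have hρσ : ∀ j, σ j ≠ j → ρ j = σ j := by
    intro j hj
    have h1 : τ j = j := (hdisj j).1 hj
    simp [hρdef, Equiv.Perm.mul_apply, h1]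
  have hτfix : ∀ j, τ j ≠ j → σ (τ j) = τ j := by
    intro j hj
    have h2 : τ (τ j) ≠ τ j := fun h => hj (τ.injective h)
    exact (hdisj (τ j)).2 h2
  have hρτ : ∀ j, τ j ≠ j → ρ j = τ j := by
    intro j hj
    simp [hρdef, Equiv.Perm.mul_apply, hτfix j hj]
  have hρfix : ∀ j, σ j = j → τ j = j → ρ j = j := by
    intro j h1 h2
    simp [hρdef, Equiv.Perm.mul_apply, h1, h2]
  -- basic facts about f
  have hfP : ∀ j, σ j ≠ j → f j = Pm := by
    intro j hj
    simp only [hfdef]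
    rw [if_neg hj]
  have hfQ : ∀ j, τ j ≠ j → f j = Qm := by
    intro j hj
    have h1 : σ j = j := (hdisj j).2 hj
    simp only [hfdef]
    rw [if_pos h1, if_neg hj]
  have hf1 : ∀ j, σ j = j → τ j = j → f j = 1 := by
    intro j h1 h2
    simp only [hfdef]
    rw [if_pos h1, if_pos h2]
  have hidem : ∀ j, f j * f j = f j := by
    intro j
    by_cases h1 : σ j = j
    · by_cases h2 : τ j = j
      · rw [hf1 j h1 h2, one_mul]
      · rw [hfQ j h2]; exact Qm_idem
    · rw [hfP j h1]; exact Pm_idem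
  have hsub : ∀ j, f j * (1 - f j) = 0 := fun j => by
    rw [mul_sub, mul_one, hidem, sub_self]
  have hsub' : ∀ j, (1 - f j) * f j = 0 := fun j => by
    rw [sub_mul, one_mul, hidem, sub_self]
  have hcidem : ∀ j, (1 - f j) * (1 - f j) = 1 - f j := fun j => by
    rw [mul_sub, mul_one, hsub' j, sub_zero]
  have hfρ : ∀ j, f (ρ j) = f j := by
    intro j
    by_cases h1 : σ j = j
    · by_cases h2 : τ j = j
      · rw [hρfix j h1 h2]
      · rw [hρτ j h2, hfQ j h2, hfQ (τ j) (fun h => h2 (τ.injective h))]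
    · rw [hρσ j h1, hfP j h1, hfP (σ j) (fun h => h1 (σ.injective h))]
  have hρadj : ∀ i j, Γ.Adj (ρ i) (ρ j) ↔ Γ.Adj i j := by
    intro i j
    simp only [hρdef, Equiv.Perm.mul_apply]
    rw [hσ, hτ]
  set u : Matrix (Fin n) (Fin n) (Matrix (Fin 2) (Fin 2) ℂ) :=
    fun i j => (if i = ρ j then f j else 0) + (if i = j then 1 - f j else 0) with hudef
  have hu : ∀ i j, u i j = (if i = ρ j then f j else 0) + (if i = j then 1 - f j else 0) :=
    fun i j => rfl
  -- zero relations from adjacency mismatch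
  have hzero : ∀ i j k l, ¬ (Γ.Adj i j ↔ Γ.Adj k l) → u i k * u j l = 0 := by
    intro i j k l h
    rw [hu, hu, add_mul, mul_add, mul_add]
    have hT1 : (if i = ρ k then f k else 0) * (if j = ρ l then f l else 0) = 0 := by
      by_cases h1 : i = ρ k
      · by_cases h2 : j = ρ l
        · rw [if_pos h1, if_pos h2]
          rw [h1, h2] at h
          exact absurd (hρadj k l) h
        · rw [if_neg h2, mul_zero]
      · rw [if_neg h1, zero_mul]
    have hT4 : (if i = k then 1 - f k else 0) * (if j = l then 1 - f l else 0) = 0 := by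
      by_cases h1 : i = k
      · by_cases h2 : j = l
        · rw [if_pos h1, if_pos h2]
          rw [h1, h2] at h
          exact absurd Iff.rfl h
        · rw [if_neg h2, mul_zero]
      · rw [if_neg h1, zero_mul]
    have hT2 : (if i = ρ k then f k else 0) * (if j = l then 1 - f l else 0) = 0 := by
      by_cases h1 : i = ρ k
      · by_cases h2 : j = l
        · rw [if_pos h1, if_pos h2]
          rw [h1, h2] at h
          by_cases h3 : σ k = k
          · by_cases h4 : τ k = k
            · exact absurd (by rw [hρfix k h3 h4]) h
            · by_cases h5 : τ l = l
              · refine absurd ?_ h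
                rw [hρτ k h4]
                simpa only [h5] using hτ k l
              · rw [hfQ k h4, ← hfQ l h5]
                exact hsub l
          · by_cases h5 : σ l = l
            · refine absurd ?_ h
              rw [hρσ k h3]
              simpa only [h5] using hσ k l
            · rw [hfP k h3, ← hfP l h5]
              exact hsub l
        · rw [if_neg h2, mul_zero]
      · rw [if_neg h1, zero_mul]
    have hT3 : (if i = k then 1 - f k else 0) * (if j = ρ l then f l else 0) = 0 := by
      by_cases h1 : i = k
      · by_cases h2 : j = ρ l
        · rw [if_pos h1, if_pos h2]
          rw [h1, h2] at h
          by_cases h3 : σ l = l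
          · by_cases h4 : τ l = l
            · exact absurd (by rw [hρfix l h3 h4]) h
            · by_cases h5 : τ k = k
              · refine absurd ?_ h
                rw [hρτ l h4]
                simpa only [h5] using hτ k l
              · rw [hfQ l h4, ← hfQ k h5]
                exact hsub' k
          · by_cases h5 : σ k = k
            · refine absurd ?_ h
              rw [hρσ l h3]
              simpa only [h5] using hσ k l
            · rw [hfP l h3, ← hfP k h5]
              exact hsub' k
        · rw [if_neg h2, mul_zero]
      · rw [if_neg h1, zero_mul]
    rw [hT1, hT2, hT3, hT4]
    simp
  -- magic: rows
  have hmagic1 : ∀ i j k, u i j * u i k = if j = k then u i j else 0 := by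
    intro i j k
    by_cases hjk : j = k
    · subst hjk
      rw [if_pos rfl, hu, add_mul, mul_add, mul_add]
      have hAA : (if i = ρ j then f j else 0) * (if i = ρ j then f j else 0)
          = (if i = ρ j then f j else 0) := by
        by_cases h1 : i = ρ j
        · rw [if_pos h1, hidem j]
        · rw [if_neg h1, mul_zero]
      have hAB : (if i = ρ j then f j else 0) * (if i = j then 1 - f j else 0) = 0 := by
        by_cases h1 : i = ρ j
        · by_cases h2 : i = j
          · rw [if_pos h1, if_pos h2]; exact hsub j
          · rw [if_neg h2, mul_zero]
        · rw [if_neg h1, zero_mul]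
      have hBA : (if i = j then 1 - f j else 0) * (if i = ρ j then f j else 0) = 0 := by
        by_cases h1 : i = j
        · by_cases h2 : i = ρ j
          · rw [if_pos h1, if_pos h2]; exact hsub' j
          · rw [if_neg h2, mul_zero]
        · rw [if_neg h1, zero_mul]
      have hBB : (if i = j then 1 - f j else 0) * (if i = j then 1 - f j else 0)
          = (if i = j then 1 - f j else 0) := by
        by_cases h1 : i = j
        · rw [if_pos h1, hcidem j]
        · rw [if_neg h1, mul_zero]
      rw [hAA, hAB, hBA, hBB, add_zero, zero_add]
    · rw [if_neg hjk, hu, hu, add_mul, mul_add, mul_add]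
      have hT1 : (if i = ρ j then f j else 0) * (if i = ρ k then f k else 0) = 0 := by
        by_cases h1 : i = ρ j
        · by_cases h2 : i = ρ k
          · exact absurd (ρ.injective (h1.symm.trans h2)) hjk
          · rw [if_neg h2, mul_zero]
        · rw [if_neg h1, zero_mul]
      have hT2 : (if i = ρ j then f j else 0) * (if i = k then 1 - f k else 0) = 0 := by
        by_cases h1 : i = ρ j
        · by_cases h2 : i = k
          · have hk : k = ρ j := h2.symm.trans h1
            rw [if_pos h1, if_pos h2, hk, hfρ j]
            exact hsub j
          · rw [if_neg h2, mul_zero]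
        · rw [if_neg h1, zero_mul]
      have hT3 : (if i = j then 1 - f j else 0) * (if i = ρ k then f k else 0) = 0 := by
        by_cases h1 : i = j
        · by_cases h2 : i = ρ k
          · have hj : j = ρ k := h1.symm.trans h2
            rw [if_pos h1, if_pos h2, hj, hfρ k]
            exact hsub' k
          · rw [if_neg h2, mul_zero]
        · rw [if_neg h1, zero_mul]
      have hT4 : (if i = j then 1 - f j else 0) * (if i = k then 1 - f k else 0) = 0 := by
        by_cases h1 : i = j
        · by_cases h2 : i = k
          · exact absurd (h1.symm.trans h2) hjk
          · rw [if_neg h2, mul_zero]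
        · rw [if_neg h1, zero_mul]
      rw [hT1, hT2, hT3, hT4]
      simp
  -- magic: columns
  have hmagic2 : ∀ i j k, u j i * u k i = if j = k then u j i else 0 := by
    intro i j k
    by_cases hjk : j = k
    · subst hjk
      rw [if_pos rfl, hu, add_mul, mul_add, mul_add]
      have hAA : (if j = ρ i then f i else 0) * (if j = ρ i then f i else 0)
          = (if j = ρ i then f i else 0) := by
        by_cases h1 : j = ρ i
        · rw [if_pos h1, hidem i]
        · rw [if_neg h1, mul_zero]
      have hAB : (if j = ρ i then f i else 0) * (if j = i then 1 - f i else 0) = 0 := by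
        by_cases h1 : j = ρ i
        · by_cases h2 : j = i
          · rw [if_pos h1, if_pos h2]; exact hsub i
          · rw [if_neg h2, mul_zero]
        · rw [if_neg h1, zero_mul]
      have hBA : (if j = i then 1 - f i else 0) * (if j = ρ i then f i else 0) = 0 := by
        by_cases h1 : j = i
        · by_cases h2 : j = ρ i
          · rw [if_pos h1, if_pos h2]; exact hsub' i
          · rw [if_neg h2, mul_zero]
        · rw [if_neg h1, zero_mul]
      have hBB : (if j = i then 1 - f i else 0) * (if j = i then 1 - f i else 0)
          = (if j = i then 1 - f i else 0) := by
        by_cases h1 : j = i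
        · rw [if_pos h1, hcidem i]
        · rw [if_neg h1, mul_zero]
      rw [hAA, hAB, hBA, hBB, add_zero, zero_add]
    · rw [if_neg hjk, hu, hu, add_mul, mul_add, mul_add]
      have hT1 : (if j = ρ i then f i else 0) * (if k = ρ i then f i else 0) = 0 := by
        by_cases h1 : j = ρ i
        · by_cases h2 : k = ρ i
          · exact absurd (h1.trans h2.symm) hjk
          · rw [if_neg h2, mul_zero]
        · rw [if_neg h1, zero_mul]
      have hT2 : (if j = ρ i then f i else 0) * (if k = i then 1 - f i else 0) = 0 := by
        by_cases h1 : j = ρ i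
        · by_cases h2 : k = i
          · rw [if_pos h1, if_pos h2]; exact hsub i
          · rw [if_neg h2, mul_zero]
        · rw [if_neg h1, zero_mul]
      have hT3 : (if j = i then 1 - f i else 0) * (if k = ρ i then f i else 0) = 0 := by
        by_cases h1 : j = i
        · by_cases h2 : k = ρ i
          · rw [if_pos h1, if_pos h2]; exact hsub' i
          · rw [if_neg h2, mul_zero]
        · rw [if_neg h1, zero_mul]
      have hT4 : (if j = i then 1 - f i else 0) * (if k = i then 1 - f i else 0) = 0 := by
        by_cases h1 : j = i
        · by_cases h2 : k = i
          · exact absurd (h1.trans h2.symm) hjk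
          · rw [if_neg h2, mul_zero]
        · rw [if_neg h1, zero_mul]
      rw [hT1, hT2, hT3, hT4]
      simp
  -- row sums
  have hrow : ∀ i, ∑ k, u i k = 1 := by
    intro i
    have h1 : ∑ k, (if i = ρ k then f k else 0) = f (ρ⁻¹ i) := by
      rw [Finset.sum_eq_single (ρ⁻¹ i)]
      · rw [if_pos ((Equiv.Perm.inv_eq_iff_eq (f := ρ) (x := i) (y := ρ⁻¹ i)).mp rfl)]
      · intro c _ hc
        rw [if_neg]
        intro he
        apply hc
        rw [he]
        exact (Equiv.Perm.eq_inv_iff_eq (f := ρ) (x := c) (y := ρ c)).mpr rfl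
      · intro hmem; exact absurd (Finset.mem_univ _) hmem
    have h2 : ∑ k, (if i = k then 1 - f k else 0) = 1 - f i := by
      rw [Finset.sum_eq_single i]
      · rw [if_pos rfl]
      · intro c _ hc
        rw [if_neg (fun he => hc he.symm)]
      · intro hmem; exact absurd (Finset.mem_univ _) hmem
    have h3 : f (ρ⁻¹ i) = f i := by
      rw [← hfρ (ρ⁻¹ i), ← (Equiv.Perm.inv_eq_iff_eq (f := ρ) (x := i) (y := ρ⁻¹ i)).mp rfl]
    calc ∑ k, u i k
        = ∑ k, ((if i = ρ k then f k else 0) + (if i = k then 1 - f k else 0)) := rfl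
      _ = f (ρ⁻¹ i) + (1 - f i) := by rw [Finset.sum_add_distrib, h1, h2]
      _ = 1 := by rw [h3]; abel
  -- column sums
  have hcol : ∀ i, ∑ k, u k i = 1 := by
    intro i
    have h1 : ∑ k, (if k = ρ i then f i else 0) = f i := by
      rw [Finset.sum_eq_single (ρ i)]
      · rw [if_pos rfl]
      · intro c _ hc
        rw [if_neg hc]
      · intro hmem; exact absurd (Finset.mem_univ _) hmem
    have h2 : ∑ k, (if k = i then 1 - f i else 0) = 1 - f i := by
      rw [Finset.sum_eq_single i]
      · rw [if_pos rfl]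
      · intro c _ hc
        rw [if_neg hc]
      · intro hmem; exact absurd (Finset.mem_univ _) hmem
    calc ∑ k, u k i
        = ∑ k, ((if k = ρ i then f i else 0) + (if k = i then 1 - f i else 0)) := rfl
      _ = f i + (1 - f i) := by rw [Finset.sum_add_distrib, h1, h2]
      _ = 1 := by abel
  -- noncommuting entries
  have hua : u (σ a) a = Pm := by
    rw [hu, if_pos (hρσ a ha).symm, if_neg ha, hfP a ha, add_zero]
  have hub : u (τ b) b = Qm := by
    rw [hu, if_pos (hρτ b hb).symm, if_neg hb, hfQ b hb, add_zero]
  refine ⟨u, ⟨⟨hmagic1, hmagic2, hrow, hcol⟩, fun i j k l h =>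
    ⟨hzero i j k l h, hzero j i l k (by rw [Γ.adj_comm j i, Γ.adj_comm l k]; exact h)⟩⟩,
    σ a, a, τ b, b, ?_⟩
  rw [hua, hub]
  exact PQ_ne
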